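/- Let n, t, m be positive natural numbers and ε > 0, and let β : ℕ → Fin m be a binning function assigning each degree value to one of m histogram bins. Let U be a finite subset of Fin n (the set of users), let k ∈ U, and let U' = U.erase k (node-neighboring: the second dataset is obtained by removing user k). For each week j : Fin t let d j : Fin n → ℕ give the ARP degree of each user in week j. Define the histograms H : Fin t → Fin m → ℝ and H' : Fin t → Fin m → ℝ by H j b = card {u ∈ U | β (d j u) = b} and H' j b = card {u ∈ U' | β (d j u) = b}. Let L be the product measure on Fin t → Fin m → ℝ whose t·m coordinates are i.i.d. Lap(t/ε), and let P : (Fin t → Fin m → ℝ) → (Fin t → Fin m → ℝ) be any measurable function (the threshold-at-zero-then-round post-processing applied to every bin). Then the pushforward of L under y ↦ P(H + y) and the pushforward of L under y ↦ P(H' + y) are (ε, 0)-indistinguishable. (The histogram-based approach satisfies ε-node-differential privacy.) -/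

import Mathlib

open MeasureTheory Real

/-- The Laplace measure `Lap(b)` on `ℝ` with scale `b`: the measure with density
`y ↦ (2b)⁻¹ · exp(−|y|/b)` with respect to Lebesgue measure. -/
noncomputable def laplaceMeasure (b : ℝ) : Measure ℝ :=
  volume.withDensity fun y => ENNReal.ofReal ((2 * b)⁻¹ * Real.exp (-|y| / b))

/-- Measures `μ` and `ν` are `(ε, δ)`-indistinguishable if for every measurable set `S`,
`μ S ≤ exp ε * ν S + δ`. -/
def Indist {X : Type*} [MeasurableSpace X] (μ ν : Measure X) (ε δ : ℝ) : Prop :=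
  ∀ S : Set X, MeasurableSet S →
    μ S ≤ ENNReal.ofReal (Real.exp ε) * ν S + ENNReal.ofReal δ

/-- The weekly degree histogram: for week `j` and bin `b`, the number of users in `U`
whose degree in week `j` falls into bin `b` under the binning function `β`. -/
def degreeHistogram {n t m : ℕ} (β : ℕ → Fin m) (U : Finset (Fin n))
    (d : Fin t → Fin n → ℕ) : Fin t → Fin m → ℝ :=
  fun j b => ((U.filter fun u => β (d j u) = b).card : ℝ)

section Aux

open Set
open scoped ENNReal

lemma lap_integrable {b : ℝ} (hb : 0 < b) :
    Integrable (fun y : ℝ => (2 * b)⁻¹ * Real.exp (-|y| / b)) := by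
  apply Integrable.const_mul
  have hI : IntegrableOn (fun y : ℝ => Real.exp (-|y| / b)) (Ioi 0) := by
    refine ((exp_neg_integrableOn_Ioi 0 (inv_pos.2 hb))).congr_fun ?_ measurableSet_Ioi
    intro y hy
    simp only
    rw [abs_of_pos hy]
    ring_nf
  have hneg : IntegrableOn (fun y : ℝ => Real.exp (-|y| / b)) (Iio 0) := by
    have hm : volume.restrict (Iio (0:ℝ)) = Measure.map Neg.neg (volume.restrict (Ioi (0:ℝ))) := by
      have : Ioi (0:ℝ) = Neg.neg ⁻¹' (Iio 0) := by ext x; simp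
      rw [this, ← Measure.restrict_map measurable_neg measurableSet_Iio,
        Measure.map_neg_eq_self]
    rw [IntegrableOn, hm, measurableEmbedding_neg.integrable_map_iff]
    refine hI.congr_fun ?_ measurableSet_Ioi
    intro y hy
    simp [Function.comp]
  have huniv : Iio (0:ℝ) ∪ Ici 0 = univ := Iio_union_Ici
  rw [← integrableOn_univ, ← huniv]
  refine hneg.union ?_
  rw [integrableOn_Ici_iff_integrableOn_Ioi]
  exact hI

lemma lap_isFiniteMeasure {b : ℝ} (hb : 0 < b) : IsFiniteMeasure (laplaceMeasure b) := by
  constructor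
  rw [laplaceMeasure, withDensity_apply _ MeasurableSet.univ, Measure.restrict_univ,
    ← ofReal_integral_eq_lintegral_ofReal (lap_integrable hb)]
  · exact ENNReal.ofReal_lt_top
  · filter_upwards with y
    positivity

lemma lap_shift_le {b : ℝ} (hb : 0 < b) (a : ℝ) :
    Measure.map (fun y => a + y) (laplaceMeasure b) ≤
      ENNReal.ofReal (Real.exp (|a| / b)) • laplaceMeasure b := by
  set g : ℝ → ℝ≥0∞ := fun y => ENNReal.ofReal ((2 * b)⁻¹ * Real.exp (-|y| / b)) with hg_def
  have hg : Measurable g := by fun_prop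
  refine Measure.le_iff.2 fun s hs => ?_
  rw [Measure.map_apply (measurable_const_add a) hs, Measure.smul_apply, smul_eq_mul,
    laplaceMeasure, withDensity_apply _ (measurable_const_add a hs),
    withDensity_apply _ hs]
  have key : ∫⁻ x in (fun y => a + y) ⁻¹' s, g x ∂volume
      = ∫⁻ y in s, g (y - a) ∂volume := by
    conv_rhs => rw [← map_add_left_eq_self volume a]
    rw [setLIntegral_map hs (show Measurable fun y : ℝ => g (y - a) by fun_prop)
      (measurable_const_add a)]
    simp
  rw [key, ← lintegral_const_mul _ hg]
  refine setLIntegral_mono (by fun_prop) fun y _ => ?_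
  simp only [hg_def]
  rw [← ENNReal.ofReal_mul (exp_nonneg _)]
  apply ENNReal.ofReal_le_ofReal
  rw [show Real.exp (|a| / b) * ((2 * b)⁻¹ * Real.exp (-|y| / b))
      = (2 * b)⁻¹ * (Real.exp (|a| / b) * Real.exp (-|y| / b)) by ring, ← Real.exp_add]
  have h1 : |y| - |a| ≤ |y - a| := abs_sub_abs_le_abs_sub y a
  have h2 : -|y - a| / b ≤ (|a| / b + -|y| / b) := by
    rw [← add_div, div_le_div_iff₀ hb hb]
    nlinarith
  have := Real.exp_le_exp.2 h2
  nlinarith [inv_pos.2 (by linarith : (0:ℝ) < 2 * b), Real.exp_pos (-|y - a| / b),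
    Real.exp_pos (|a| / b + -|y| / b)]

variable {ι : Type*} [Fintype ι] {α : ι → Type*} [∀ i, MeasurableSpace (α i)]

lemma my_pi_mono {μ ν : ∀ i, Measure (α i)} (h : ∀ i, μ i ≤ ν i) :
    Measure.pi μ ≤ Measure.pi ν := by
  refine Measure.le_iff.2 fun s hs => ?_
  rw [Measure.pi, Measure.pi, toMeasure_apply _ _ hs, toMeasure_apply _ _ hs]
  have : OuterMeasure.pi (fun i => (μ i).toOuterMeasure)
      ≤ OuterMeasure.pi fun i => (ν i).toOuterMeasure := by
    simp only [OuterMeasure.pi]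
    rw [OuterMeasure.le_boundedBy]
    intro t
    refine (OuterMeasure.boundedBy_le (m := piPremeasure fun i => (μ i).toOuterMeasure) t).trans ?_
    simp only [piPremeasure]
    exact Finset.prod_le_prod' fun i _ => Measure.le_iff'.1 (h i) _
  exact this s

lemma my_pi_map_eq (μ : ∀ i, Measure (α i)) [∀ i, SigmaFinite (μ i)]
    (f : ∀ i, α i → α i) (hf : ∀ i, Measurable (f i))
    (hsf : ∀ i, SigmaFinite (Measure.map (f i) (μ i))) :
    Measure.map (fun (y : ∀ i, α i) i => f i (y i)) (Measure.pi μ)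
      = Measure.pi (fun i => Measure.map (f i) (μ i)) := by
  haveI := hsf
  have hF : Measurable (fun (y : ∀ i, α i) i => f i (y i)) :=
    measurable_pi_lambda _ fun i => (hf i).comp (measurable_pi_apply i)
  refine (Measure.pi_eq fun s hs => ?_).symm
  rw [Measure.map_apply hF (MeasurableSet.univ_pi hs)]
  have hpre : (fun (y : ∀ i, α i) i => f i (y i)) ⁻¹' (univ.pi s)
      = univ.pi fun i => f i ⁻¹' s i := by
    ext y; simp [Set.mem_pi]
  rw [hpre, Measure.pi_pi]
  exact Finset.prod_congr rfl fun i _ => (Measure.map_apply (hf i) (hs i)).symm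

lemma my_pi_smul (K : ι → ℝ≥0∞) (hK : ∀ i, K i ≠ ∞) (μ : ∀ i, Measure (α i))
    [∀ i, IsFiniteMeasure (μ i)] :
    Measure.pi (fun i => K i • μ i) = (∏ i, K i) • Measure.pi μ := by
  haveI : ∀ i, IsFiniteMeasure (K i • μ i) := fun i => by
    constructor
    rw [Measure.smul_apply, smul_eq_mul]
    exact ENNReal.mul_lt_top (hK i).lt_top (measure_lt_top _ _)
  refine (Measure.pi_eq fun s hs => ?_)
  rw [Measure.smul_apply, smul_eq_mul, Measure.pi_pi]
  simp only [Measure.smul_apply, smul_eq_mul]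
  rw [Finset.prod_mul_distrib]

end Aux

/-- The histogram-based approach satisfies `ε`-node-differential privacy: on
node-neighboring user sets (one user removed), releasing the weekly degree histograms
perturbed by i.i.d. `Lap(t/ε)` noise in every bin, followed by any measurable
post-processing `P`, is `(ε, 0)`-indistinguishable. -/
theorem histogram_approach_node_dp (n t m : ℕ) (hn : 0 < n) (ht : 0 < t) (hm : 0 < m)
    (ε : ℝ) (hε : 0 < ε) (β : ℕ → Fin m) (U : Finset (Fin n)) (k : Fin n) (hk : k ∈ U)
    (d : Fin t → Fin n → ℕ)
    (P : (Fin t → Fin m → ℝ) → (Fin t → Fin m → ℝ)) (hP : Measurable P) :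
    Indist
      (Measure.map (fun y => P (degreeHistogram β U d + y))
        (Measure.pi fun _ : Fin t => Measure.pi fun _ : Fin m => laplaceMeasure ((t : ℝ) / ε)))
      (Measure.map (fun y => P (degreeHistogram β (U.erase k) d + y))
        (Measure.pi fun _ : Fin t => Measure.pi fun _ : Fin m => laplaceMeasure ((t : ℝ) / ε)))
      ε 0 := by
  classical
  intro S hS
  set b : ℝ := (t : ℝ) / ε with hb_def
  have hb : 0 < b := div_pos (by exact_mod_cast ht) hε
  haveI hL1fin : IsFiniteMeasure (laplaceMeasure b) := lap_isFiniteMeasure hb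
  set L1 : Measure ℝ := laplaceMeasure b with hL1
  set Lm : Measure (Fin m → ℝ) := Measure.pi (fun _ : Fin m => L1) with hLm
  set μL : Measure (Fin t → Fin m → ℝ) := Measure.pi (fun _ : Fin t => Lm) with hμL
  set H := degreeHistogram β U d with hH
  set H' := degreeHistogram β (U.erase k) d with hH'
  set c : Fin t → Fin m → ℝ := fun j i => if β (d j k) = i then (1 : ℝ) else 0 with hc
  -- H = H' + c
  have hHc : H = H' + c := by
    funext j i
    simp only [hH, hH', hc, degreeHistogram, Pi.add_apply, Finset.filter_erase]
    by_cases h : β (d j k) = i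
    · have hk' : k ∈ U.filter (fun u => β (d j u) = i) := Finset.mem_filter.2 ⟨hk, h⟩
      have hcard : 1 ≤ (U.filter fun u => β (d j u) = i).card :=
        Finset.card_pos.2 ⟨k, hk'⟩
      rw [Finset.card_erase_of_mem hk', if_pos h, Nat.cast_sub hcard]
      push_cast
      ring
    · rw [Finset.erase_eq_of_notMem
          (fun hc' : k ∈ U.filter (fun u => β (d j u) = i) => h (Finset.mem_filter.1 hc').2),
        if_neg h, add_zero]
  -- measurability
  have hmeas1 : Measurable (fun y : Fin t → Fin m → ℝ => P (H + y)) := by fun_prop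
  have hmeas2 : Measurable (fun y : Fin t → Fin m → ℝ => P (H' + y)) := by fun_prop
  have hmeasc : Measurable (fun y : Fin t → Fin m → ℝ => c + y) := by fun_prop
  rw [Measure.map_apply hmeas1 hS, Measure.map_apply hmeas2 hS]
  set T : Set (Fin t → Fin m → ℝ) := (fun y => P (H' + y)) ⁻¹' S with hT
  have hTm : MeasurableSet T := hmeas2 hS
  have hcomp : (fun y : Fin t → Fin m → ℝ => P (H + y)) ⁻¹' S
      = (fun y => c + y) ⁻¹' T := by
    ext y
    simp only [Set.mem_preimage, hT, hHc, add_assoc]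
  rw [hcomp, ← Measure.map_apply hmeasc hTm]
  -- the key chain of inequalities
  have hchain : Measure.map (fun y => c + y) μL ≤ ENNReal.ofReal (Real.exp ε) • μL := by
    have hsf1 : ∀ (a : ℝ), SigmaFinite (Measure.map (fun x => a + x) L1) := fun a => by
      haveI := Measure.isFiniteMeasure_map L1 (fun x => a + x)
      infer_instance
    have hinner : ∀ j : Fin t, Measure.map (fun z : Fin m → ℝ => c j + z) Lm
        = Measure.pi (fun i : Fin m => Measure.map (fun x => c j i + x) L1) := fun j => by
      exact my_pi_map_eq (fun _ : Fin m => L1) (fun i x => c j i + x)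
        (fun i => measurable_const_add _) (fun i => hsf1 _)
    haveI hLmfin : IsFiniteMeasure Lm := by rw [hLm]; infer_instance
    have hsf2 : ∀ j : Fin t, SigmaFinite (Measure.map (fun z : Fin m → ℝ => c j + z) Lm) :=
      fun j => by
        haveI := Measure.isFiniteMeasure_map Lm (fun z => c j + z)
        infer_instance
    have houter : Measure.map (fun y : Fin t → Fin m → ℝ => c + y) μL
        = Measure.pi (fun j : Fin t => Measure.map (fun z : Fin m → ℝ => c j + z) Lm) := by
      exact my_pi_map_eq (fun _ : Fin t => Lm) (fun j z => c j + z)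
        (fun j => measurable_const_add _) hsf2
    have hinner_le : ∀ j : Fin t, Measure.map (fun z : Fin m → ℝ => c j + z) Lm
        ≤ (∏ i : Fin m, ENNReal.ofReal (Real.exp (|c j i| / b))) • Lm := fun j => by
      rw [hinner j]
      calc Measure.pi (fun i : Fin m => Measure.map (fun x => c j i + x) L1)
          ≤ Measure.pi (fun i : Fin m =>
              ENNReal.ofReal (Real.exp (|c j i| / b)) • L1) :=
            my_pi_mono fun i => lap_shift_le hb (c j i)
        _ = (∏ i : Fin m, ENNReal.ofReal (Real.exp (|c j i| / b))) • Lm := by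
            rw [my_pi_smul _ (fun i => ENNReal.ofReal_ne_top) (fun _ : Fin m => L1), hLm]
    calc Measure.map (fun y : Fin t → Fin m → ℝ => c + y) μL
        = Measure.pi (fun j : Fin t => Measure.map (fun z : Fin m → ℝ => c j + z) Lm) := houter
      _ ≤ Measure.pi (fun j : Fin t =>
            (∏ i : Fin m, ENNReal.ofReal (Real.exp (|c j i| / b))) • Lm) :=
          my_pi_mono hinner_le
      _ = (∏ j : Fin t, ∏ i : Fin m, ENNReal.ofReal (Real.exp (|c j i| / b))) • μL := by
          rw [my_pi_smul _ (fun j => by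
            exact (ENNReal.prod_lt_top (fun i _ => ENNReal.ofReal_lt_top)).ne)
            (fun _ : Fin t => Lm), hμL]
      _ = ENNReal.ofReal (Real.exp ε) • μL := by
          congr 1
          have h1 : ∀ j : Fin t, ∏ i : Fin m, ENNReal.ofReal (Real.exp (|c j i| / b))
              = ENNReal.ofReal (Real.exp (∑ i : Fin m, |c j i| / b)) := fun j => by
            rw [Real.exp_sum, ← ENNReal.ofReal_prod_of_nonneg (fun i _ => exp_nonneg _)]
          simp_rw [h1]
          rw [← ENNReal.ofReal_prod_of_nonneg (fun j _ => exp_nonneg _), ← Real.exp_sum]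
          congr 1
          have hsum : ∀ j : Fin t, ∑ i : Fin m, |c j i| / b = 1 / b := fun j => by
            rw [← Finset.sum_div]
            congr 1
            simp [hc, apply_ite abs]
          simp_rw [hsum]
          rw [Finset.sum_const, Finset.card_univ, Fintype.card_fin, nsmul_eq_mul, hb_def]
          field_simp
  have := Measure.le_iff'.1 hchain T
  rw [Measure.smul_apply, smul_eq_mul] at this
  simpa using this
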